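/- If 0 ≤ μτ < 1/e, then dexp(-μt; -μτ) → 0 as t → ∞. -/

import Mathlib

open Real Set Filter

noncomputable def dexp (μ τ t : ℝ) : ℝ :=
  ∑' n : ℕ, (-μ) ^ n * (t - n * τ) ^ n / (Nat.factorial n) * (if (n : ℝ) * τ ≤ t then 1 else 0)

namespace DexpAux

/-- Smoothed version of the terms, using `max`. -/
noncomputable def p (μ τ : ℝ) (n : ℕ) (t : ℝ) : ℝ :=
  (-μ) ^ n * max (t - n * τ) 0 ^ n / (Nat.factorial n)

noncomputable def F (μ τ : ℝ) (t : ℝ) : ℝ := ∑' n : ℕ, p μ τ n t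

lemma p_zero (μ τ t : ℝ) : p μ τ 0 t = 1 := by simp [p]

lemma p_eq_zero {μ τ : ℝ} {n : ℕ} (hn : n ≠ 0) {t : ℝ} (h : t ≤ n * τ) :
    p μ τ n t = 0 := by
  have : max (t - n * τ) 0 = 0 := max_eq_right (by linarith)
  simp [p, this, zero_pow hn]

lemma F_eq_sum {μ τ : ℝ} (hτ : 0 ≤ τ) {K : ℕ} (hK1 : 1 ≤ K) {t : ℝ} (hK : t < K * τ) :
    F μ τ t = ∑ n ∈ Finset.range K, p μ τ n t := by
  refine tsum_eq_sum ?_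
  intro n hn
  have hKn : K ≤ n := by simpa using hn
  have hn0 : n ≠ 0 := by omega
  refine p_eq_zero hn0 ?_
  have : (K : ℝ) * τ ≤ n * τ := by
    apply mul_le_mul_of_nonneg_right _ hτ
    exact_mod_cast hKn
  linarith

lemma F_eq_one {μ τ : ℝ} (hτ : 0 ≤ τ) {t : ℝ} (ht : t ≤ τ) : F μ τ t = 1 := by
  have : F μ τ t = ∑ n ∈ ({0} : Finset ℕ), p μ τ n t := by
    refine tsum_eq_sum ?_
    intro n hn
    have hn0 : n ≠ 0 := by simpa using hn
    refine p_eq_zero hn0 ?_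
    have h1 : (1 : ℝ) * τ ≤ n * τ := by
      apply mul_le_mul_of_nonneg_right _ hτ
      exact_mod_cast Nat.one_le_iff_ne_zero.mpr hn0
    linarith
  rw [this, Finset.sum_singleton, p_zero]

lemma dexp_eq_F {μ τ : ℝ} (hτ : 0 ≤ τ) {t : ℝ} (ht : 0 ≤ t) : dexp μ τ t = F μ τ t := by
  refine tsum_congr fun n => ?_
  by_cases h : (n : ℝ) * τ ≤ t
  · rw [if_pos h, mul_one]
    have : max (t - n * τ) 0 = t - n * τ := max_eq_left (by linarith)
    rw [p, this]
  · rw [if_neg h, mul_zero]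
    push_neg at h
    have hn0 : n ≠ 0 := by
      rintro rfl
      simp at h
      linarith
    rw [p_eq_zero hn0 h.le]

lemma continuous_p (μ τ : ℝ) (n : ℕ) : Continuous (p μ τ n) := by
  unfold p; fun_prop

lemma exists_K {τ : ℝ} (hτ : 0 < τ) (t : ℝ) : ∃ K : ℕ, 1 ≤ K ∧ t + 1 < K * τ := by
  obtain ⟨K, hK⟩ := exists_nat_gt ((t + 1) / τ)
  refine ⟨K + 1, by omega, ?_⟩
  rw [div_lt_iff₀ hτ] at hK
  push_cast
  nlinarith

lemma continuous_F {μ τ : ℝ} (hτ : 0 < τ) : Continuous (F μ τ) := by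
  rw [continuous_iff_continuousAt]
  intro t
  obtain ⟨K, hK1, hK⟩ := exists_K hτ t
  have hev : (fun y => ∑ n ∈ Finset.range K, p μ τ n y) =ᶠ[nhds t] F μ τ := by
    filter_upwards [Iio_mem_nhds (show t < K * τ by linarith)] with y hy
    exact (F_eq_sum hτ.le hK1 hy).symm
  exact ContinuousAt.congr
    ((continuous_finset_sum _ fun n _ => continuous_p μ τ n).continuousAt) hev

lemma hasDerivAt_maxpow_zero {n : ℕ} (hn : 2 ≤ n) (c : ℝ) :
    HasDerivAt (fun y : ℝ => max (y - c) 0 ^ n) 0 c := by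
  rw [hasDerivAt_iff_tendsto_slope]
  apply squeeze_zero_norm (a := fun y => |y - c| ^ (n - 1))
  · intro y
    rcases eq_or_ne y c with rfl | hyc
    · simp [slope_def_field, zero_pow (show n - 1 ≠ 0 by omega)]
    · have hyc' : y - c ≠ 0 := sub_ne_zero.mpr hyc
      rw [slope_def_field]
      have h0 : max (c - c) 0 = 0 := by simp
      rw [h0, zero_pow (show n ≠ 0 by omega), sub_zero]
      rw [Real.norm_eq_abs, abs_div]
      rw [div_le_iff₀ (abs_pos.mpr hyc')]
      have h1 : |max (y - c) 0 ^ n| = max (y - c) 0 ^ n := abs_of_nonneg (by positivity)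
      rw [h1]
      have h2 : max (y - c) 0 ≤ |y - c| := max_le (le_abs_self _) (abs_nonneg _)
      calc max (y - c) 0 ^ n ≤ |y - c| ^ n := by
            exact pow_le_pow_left₀ (le_max_right _ _) h2 n
        _ = |y - c| ^ (n - 1) * |y - c| := by
            rw [← pow_succ]; congr 1; omega
  · have hc : Continuous fun y : ℝ => |y - c| ^ (n - 1) := by fun_prop
    have := hc.continuousAt (x := c)
    have h0 : |c - c| ^ (n - 1) = 0 := by
      simp [zero_pow (show n - 1 ≠ 0 by omega)]
    rw [ContinuousAt, h0] at this
    exact this.mono_left nhdsWithin_le_nhds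

lemma hasDerivAt_maxpow {n : ℕ} (hn : 1 ≤ n) {c x : ℝ} (h : c < x ∨ 2 ≤ n) :
    HasDerivAt (fun y : ℝ => max (y - c) 0 ^ n) ((n : ℝ) * max (x - c) 0 ^ (n - 1)) x := by
  rcases lt_trichotomy x c with hx | hx | hx
  · have hn2 : 2 ≤ n := h.resolve_left (by intro hc; linarith)
    have h0 : HasDerivAt (fun _ : ℝ => (0 : ℝ)) 0 x := hasDerivAt_const x 0
    have hev : (fun y : ℝ => max (y - c) 0 ^ n) =ᶠ[nhds x] fun _ => (0 : ℝ) := by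
      filter_upwards [Iio_mem_nhds hx] with y hy
      rw [max_eq_right (by simp only [mem_Iio] at hy; linarith), zero_pow (by omega)]
    have := h0.congr_of_eventuallyEq hev
    convert this using 1
    · rfl
    · rfl
    rw [max_eq_right (by linarith), zero_pow (show n - 1 ≠ 0 by omega), mul_zero]
  · subst hx
    have hn2 : 2 ≤ n := h.resolve_left (lt_irrefl _)
    convert hasDerivAt_maxpow_zero hn2 x using 1
    rw [max_eq_right (by linarith), zero_pow (show n - 1 ≠ 0 by omega), mul_zero]
  · have hpow : HasDerivAt (fun y : ℝ => (y - c) ^ n) ((n : ℝ) * (x - c) ^ (n - 1) * 1) x :=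
      ((hasDerivAt_id x).sub_const c).pow n
    have hev : (fun y : ℝ => max (y - c) 0 ^ n) =ᶠ[nhds x] fun y => (y - c) ^ n := by
      filter_upwards [Ioi_mem_nhds hx] with y hy
      rw [max_eq_left (by simp only [mem_Ioi] at hy; linarith)]
    have := hpow.congr_of_eventuallyEq hev
    convert this using 1
    · rfl
    · rfl
    rw [max_eq_left (by linarith), mul_one]

lemma hasDerivAt_p_succ {μ τ : ℝ} (hτ : 0 < τ) {m : ℕ} {x : ℝ} (hx : τ < x) :
    HasDerivAt (p μ τ (m + 1)) (-μ * p μ τ m (x - τ)) x := by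
  have hcast : ((m + 1 : ℕ) : ℝ) = (m : ℝ) + 1 := by push_cast; ring
  have hcond : ((m : ℝ) + 1) * τ < x ∨ 2 ≤ m + 1 := by
    rcases Nat.eq_zero_or_pos m with rfl | hm
    · left; simpa using hx
    · right; omega
  have hq := hasDerivAt_maxpow (n := m + 1) (by omega) (c := ((m : ℝ) + 1) * τ)
      (x := x) hcond
  have hq2 := hq.const_mul ((-μ) ^ (m + 1) / (Nat.factorial (m + 1) : ℝ))
  have hfun : (fun y => (-μ) ^ (m + 1) / (Nat.factorial (m + 1) : ℝ) *
      (max (y - ((m : ℝ) + 1) * τ) 0 ^ (m + 1))) = p μ τ (m + 1) := by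
    funext y
    rw [p, hcast]
    ring
  rw [hfun] at hq2
  convert hq2 using 1
  · rfl
  · rfl
  rw [p]
  have hfac : (Nat.factorial (m + 1) : ℝ) = ((m : ℝ) + 1) * (Nat.factorial m : ℝ) := by
    rw [Nat.factorial_succ]; push_cast; ring
  have hmax : x - τ - (m : ℝ) * τ = x - ((m : ℝ) + 1) * τ := by ring
  have hm1 : (m + 1 : ℕ) - 1 = m := by omega
  rw [hmax, hfac, hm1]
  have hfm : (Nat.factorial m : ℝ) ≠ 0 := by positivity
  have hm1' : ((m : ℝ) + 1) ≠ 0 := by positivity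
  push_cast
  field_simp
  ring

lemma hasDerivAt_F {μ τ : ℝ} (hτ : 0 < τ) {t : ℝ} (ht : τ < t) :
    HasDerivAt (F μ τ) (-μ * F μ τ (t - τ)) t := by
  obtain ⟨K, hK1, hK⟩ := exists_K hτ t
  set D : ℕ → ℝ := fun n => if n = 0 then 0 else -μ * p μ τ (n - 1) (t - τ) with hD
  have hsum : HasDerivAt (fun y => ∑ n ∈ Finset.range (K + 1), p μ τ n y)
      (∑ n ∈ Finset.range (K + 1), D n) t := by
    apply HasDerivAt.fun_sum
    intro i _
    match i with
    | 0 =>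
      have hev : p μ τ 0 =ᶠ[nhds t] fun _ => (1 : ℝ) :=
        Eventually.of_forall fun y => p_zero μ τ y
      have := (hasDerivAt_const t (1 : ℝ)).congr_of_eventuallyEq hev
      simpa [hD] using this
    | m + 1 =>
      have := hasDerivAt_p_succ (μ := μ) hτ (m := m) (x := t) ht
      simpa [hD] using this
  have hDsum : ∑ n ∈ Finset.range (K + 1), D n = -μ * F μ τ (t - τ) := by
    rw [Finset.sum_range_succ']
    have h0 : D 0 = 0 := by simp [hD]
    rw [h0, add_zero]
    have : ∀ m, D (m + 1) = -μ * p μ τ m (t - τ) := fun m => by simp [hD]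
    rw [Finset.sum_congr rfl fun m _ => this m, ← Finset.mul_sum]
    congr 1
    exact (F_eq_sum hτ.le hK1 (by linarith)).symm
  rw [hDsum] at hsum
  apply hsum.congr_of_eventuallyEq
  filter_upwards [Iio_mem_nhds (show t < (K + 1 : ℕ) * τ by push_cast; nlinarith)] with y hy
  exact F_eq_sum hτ.le (by omega) hy

noncomputable def lam (μ τ : ℝ) : ℝ := -Real.log (μ * τ) / τ

noncomputable def h (μ τ : ℝ) (t : ℝ) : ℝ := F μ τ t * Real.exp (lam μ τ * t)

section MainEst

variable {μ τ : ℝ} (hμ : 0 < μ) (hτ : 0 < τ) (hμτ : μ * τ < (Real.exp 1)⁻¹)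

include hμ hτ hμτ

lemma lam_gt : 1 / τ < lam μ τ := by
  have hμτ0 : 0 < μ * τ := by positivity
  have hlog : Real.log (μ * τ) < -1 := by
    rw [Real.log_lt_iff_lt_exp hμτ0]
    rwa [Real.exp_neg]
  rw [lam, div_lt_div_iff_of_pos_right hτ]
  linarith

lemma lam_pos : 0 < lam μ τ := lt_trans (by positivity) (lam_gt hμ hτ hμτ)

lemma lam_key : μ * Real.exp (lam μ τ * τ) = 1 / τ := by
  have hμτ0 : 0 < μ * τ := by positivity
  rw [lam, div_mul_cancel₀ _ (ne_of_gt hτ), Real.exp_neg, Real.exp_log hμτ0]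
  field_simp

lemma continuous_h : Continuous (h μ τ) := by
  unfold h
  exact (continuous_F hτ).mul (by fun_prop)

lemma hasDerivAt_h {t : ℝ} (ht : τ < t) :
    HasDerivAt (h μ τ) (lam μ τ * h μ τ t - (1 / τ) * h μ τ (t - τ)) t := by
  have hF := hasDerivAt_F (μ := μ) hτ ht
  have hexp : HasDerivAt (fun y : ℝ => Real.exp (lam μ τ * y))
      (Real.exp (lam μ τ * t) * lam μ τ) t := by
    have : HasDerivAt (fun y : ℝ => lam μ τ * y) (lam μ τ) t := by
      simpa using (hasDerivAt_id t).const_mul (lam μ τ)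
    exact this.exp
  have := hF.mul hexp
  convert this using 1
  · rfl
  · rfl
  · rfl
  unfold h
  have hsplit : lam μ τ * t = lam μ τ * τ + lam μ τ * (t - τ) := by ring
  rw [hsplit, Real.exp_add]
  have hk := lam_key hμ hτ hμτ
  linear_combination (F μ τ (t - τ) * Real.exp (lam μ τ * (t - τ))) * hk

lemma mono_h_aux {b : ℝ}
    (hyp : ∀ x ∈ Ioo τ b, 0 ≤ lam μ τ * h μ τ x - (1 / τ) * h μ τ (x - τ)) :
    MonotoneOn (h μ τ) (Icc 0 b) := by
  have m1 : MonotoneOn (h μ τ) (Iic τ) := by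
    intro x hx y hy hxy
    simp only [mem_Iic] at hx hy
    unfold h
    rw [F_eq_one hτ.le hx, F_eq_one hτ.le hy, one_mul, one_mul]
    exact Real.exp_le_exp.mpr (by nlinarith [lam_pos hμ hτ hμτ])
  have m2 : MonotoneOn (h μ τ) (Icc τ b) := by
    apply monotoneOn_of_hasDerivWithinAt_nonneg (convex_Icc τ b)
      ((continuous_h hμ hτ hμτ).continuousOn)
      (f' := fun x => lam μ τ * h μ τ x - (1 / τ) * h μ τ (x - τ))
    · intro x hx
      rw [interior_Icc] at hx
      exact (hasDerivAt_h hμ hτ hμτ hx.1).hasDerivWithinAt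
    · intro x hx
      rw [interior_Icc] at hx
      exact hyp x hx
  intro x hx y hy hxy
  rcases le_total y τ with h1 | h1
  · exact m1 (le_trans hxy h1) h1 hxy
  · rcases le_total τ x with h2 | h2
    · exact m2 ⟨h2, le_trans hxy hy.2⟩ ⟨h1, hy.2⟩ hxy
    · exact le_trans (m1 h2 (mem_Iic.mpr le_rfl) h2) (m2 ⟨le_refl τ, le_trans h1 hy.2⟩ ⟨h1, hy.2⟩ h1)

lemma h_zero : h μ τ 0 = 1 := by
  unfold h
  rw [F_eq_one hτ.le hτ.le, mul_zero, Real.exp_zero, one_mul]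

end MainEst

section MainEst2

variable {μ τ : ℝ} (hμ : 0 < μ) (hτ : 0 < τ) (hμτ : μ * τ < (Real.exp 1)⁻¹)

include hμ hτ hμτ

lemma monotone_h : MonotoneOn (h μ τ) (Ici 0) := by
  set d : ℝ → ℝ := fun t => lam μ τ * h μ τ t - (1 / τ) * h μ τ (t - τ) with hd
  have dcont : Continuous d := by
    have hc := continuous_h hμ hτ hμτ
    exact (continuous_const.mul hc).sub
      (continuous_const.mul (hc.comp (by fun_prop)))
  have hB : ∀ t, τ ≤ t → 0 ≤ d t := by
    by_contra hcon
    push_neg at hcon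
    obtain ⟨t₁, ht₁, hd₁⟩ := hcon
    set B : Set ℝ := {t | τ ≤ t ∧ d t < 0} with hBdef
    have hne : B.Nonempty := ⟨t₁, ht₁, hd₁⟩
    have hbdd : BddBelow B := ⟨τ, fun b hb => hb.1⟩
    set t₀ := sInf B with ht₀def
    have ht₀ : τ ≤ t₀ := le_csInf hne fun b hb => hb.1
    have hnotin : ∀ x ∈ Ioo τ t₀, 0 ≤ d x := by
      intro x hx
      by_contra hxd
      push_neg at hxd
      have : t₀ ≤ x := csInf_le hbdd ⟨hx.1.le, hxd⟩
      linarith [hx.2]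
    have hmono : MonotoneOn (h μ τ) (Icc 0 t₀) := mono_h_aux hμ hτ hμτ hnotin
    have h0 : h μ τ 0 = 1 := h_zero hμ hτ hμτ
    have hτ0 : (0:ℝ) ≤ t₀ - τ := by linarith
    have hmem1 : (0:ℝ) ∈ Icc 0 t₀ := ⟨le_rfl, by linarith⟩
    have hmem2 : t₀ - τ ∈ Icc (0:ℝ) t₀ := ⟨hτ0, by linarith⟩
    have hmem3 : t₀ ∈ Icc (0:ℝ) t₀ := ⟨by linarith, le_rfl⟩
    have hge1 : (1:ℝ) ≤ h μ τ (t₀ - τ) := by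
      have := hmono hmem1 hmem2 hτ0
      rwa [h0] at this
    have hle : h μ τ (t₀ - τ) ≤ h μ τ t₀ := hmono hmem2 hmem3 (by linarith)
    have hd₀ : 0 < d t₀ := by
      have hlg := lam_gt hμ hτ hμτ
      have hlp := lam_pos hμ hτ hμτ
      have : d t₀ = lam μ τ * h μ τ t₀ - (1 / τ) * h μ τ (t₀ - τ) := rfl
      rw [this]
      nlinarith
    have hev : ∀ᶠ y in nhds t₀, 0 < d y :=
      (dcont.continuousAt (x := t₀)).eventually (eventually_gt_nhds hd₀)
    rw [Metric.eventually_nhds_iff] at hev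
    obtain ⟨ε, hε, hball⟩ := hev
    have hlow : t₀ + ε ≤ t₀ := by
      apply le_csInf hne
      intro b hb
      by_contra hble
      push_neg at hble
      have hbt₀ : t₀ ≤ b := csInf_le hbdd hb
      have : dist b t₀ < ε := by
        rw [Real.dist_eq, abs_of_nonneg (by linarith)]
        linarith
      exact absurd (hball this) (not_lt.mpr hb.2.le)
    linarith
  intro x hx y hy hxy
  have hmono : MonotoneOn (h μ τ) (Icc 0 y) :=
    mono_h_aux hμ hτ hμτ fun z hz => hB z hz.1.le
  exact hmono ⟨hx, hxy⟩ ⟨hy, le_rfl⟩ hxy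

lemma F_pos {t : ℝ} (ht : 0 ≤ t) : 0 < F μ τ t := by
  have h1 : (1:ℝ) ≤ h μ τ t := by
    have := monotone_h hμ hτ hμτ (self_mem_Ici) (mem_Ici.mpr ht) ht
    rwa [h_zero hμ hτ hμτ] at this
  have hexp := Real.exp_pos (lam μ τ * t)
  unfold h at h1
  nlinarith

lemma F_antitone : AntitoneOn (F μ τ) (Ici τ) := by
  apply antitoneOn_of_hasDerivWithinAt_nonpos (convex_Ici τ)
    ((continuous_F hτ).continuousOn)
    (f' := fun x => -μ * F μ τ (x - τ))
  · intro x hx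
    rw [interior_Ici] at hx
    exact (hasDerivAt_F hτ hx).hasDerivWithinAt
  · intro x hx
    rw [interior_Ici, mem_Ioi] at hx
    have := F_pos hμ hτ hμτ (t := x - τ) (by linarith)
    nlinarith

end MainEst2

section Limit

variable {μ τ : ℝ} (hμ : 0 < μ) (hτ : 0 < τ) (hμτ : μ * τ < (Real.exp 1)⁻¹)

include hμ hτ hμτ

lemma F_tendsto_zero : Tendsto (F μ τ) atTop (nhds 0) := by
  set g : ℝ → ℝ := fun t => F μ τ (max t τ) with hg
  have hFa := F_antitone hμ hτ hμτ
  have ganti : Antitone g := by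
    intro x y hxy
    exact hFa (mem_Ici.mpr (le_max_right x τ)) (mem_Ici.mpr (le_max_right y τ))
      (max_le_max hxy le_rfl)
  have gbdd : BddBelow (range g) := by
    refine ⟨0, ?_⟩
    rintro _ ⟨t, rfl⟩
    exact (F_pos hμ hτ hμτ (le_trans hτ.le (le_max_right t τ))).le
  set L := ⨅ t, g t with hL
  have htendg : Tendsto g atTop (nhds L) := tendsto_atTop_ciInf ganti gbdd
  have hgF : ∀ᶠ t in (atTop : Filter ℝ), g t = F μ τ t := by
    filter_upwards [eventually_ge_atTop τ] with t ht
    rw [hg]; simp only []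
    rw [max_eq_left ht]
  have htendF : Tendsto (F μ τ) atTop (nhds L) := htendg.congr' hgF
  -- key inequality via MVT
  have key : ∀ᶠ t in (atTop : Filter ℝ),
      μ * F μ τ (t + 1) ≤ F μ τ (t + τ) - F μ τ (t + τ + 1) := by
    filter_upwards [eventually_ge_atTop τ] with t ht
    have hab : t + τ < t + τ + 1 := by linarith
    obtain ⟨c, hc, hceq⟩ := exists_hasDerivAt_eq_slope (F μ τ)
      (fun x => -μ * F μ τ (x - τ)) hab ((continuous_F hτ).continuousOn)
      (fun x hx => hasDerivAt_F hτ (by rcases hx with ⟨h1, _⟩; nlinarith))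
    have hc1 : τ ≤ c - τ := by rcases hc with ⟨h1, _⟩; linarith
    have hc2 : c - τ ≤ t + 1 := by rcases hc with ⟨_, h2⟩; linarith
    have hFle : F μ τ (t + 1) ≤ F μ τ (c - τ) :=
      hFa (mem_Ici.mpr hc1) (mem_Ici.mpr (by linarith)) hc2
    have heq : F μ τ (t + τ + 1) - F μ τ (t + τ) = -μ * F μ τ (c - τ) := by
      have : (t + τ + 1) - (t + τ) = (1:ℝ) := by ring
      rw [this, div_one] at hceq
      linarith [hceq]
    nlinarith
  have T1 : Tendsto (fun t => μ * F μ τ (t + 1)) atTop (nhds (μ * L)) := by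
    apply Tendsto.const_mul
    exact htendF.comp (tendsto_atTop_add_const_right atTop 1 tendsto_id)
  have T2 : Tendsto (fun t => F μ τ (t + τ) - F μ τ (t + τ + 1)) atTop (nhds (L - L)) := by
    apply Tendsto.sub
    · exact htendF.comp (tendsto_atTop_add_const_right atTop τ tendsto_id)
    · have h2 := htendF.comp (tendsto_atTop_add_const_right atTop (τ + 1) (tendsto_id (α := ℝ)))
      refine Tendsto.congr (fun t => ?_) h2
      simp only [Function.comp_apply, id_eq]
      ring_nf
  have hμL : μ * L ≤ L - L := le_of_tendsto_of_tendsto T1 T2 key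
  have hL0 : 0 ≤ L := ge_of_tendsto' htendg fun t =>
    (F_pos hμ hτ hμτ (le_trans hτ.le (le_max_right t τ))).le
  have : L = 0 := by nlinarith
  rwa [this] at htendF

end Limit

end DexpAux

/-- If `0 ≤ μτ < 1/e`, then `dexp(-μt; -μτ) → 0` as `t → ∞`. -/
theorem dexp_tendsto_zero (μ τ : ℝ) (hμ : 0 < μ) (hτ : 0 ≤ τ)
    (hμτ : μ * τ < (Real.exp 1)⁻¹) :
    Tendsto (fun t => dexp μ τ t) atTop (nhds 0) := by
  rcases eq_or_lt_of_le hτ with rfl | hτ'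
  · -- τ = 0 : dexp is exp(-μ t) for t ≥ 0
    have hev : (fun t => Real.exp (-μ * t)) =ᶠ[atTop] fun t => dexp μ 0 t := by
      filter_upwards [eventually_ge_atTop (0:ℝ)] with t ht
      have : dexp μ 0 t = ∑' n : ℕ, (-μ * t) ^ n / (Nat.factorial n) := by
        refine tsum_congr fun n => ?_
        rw [if_pos (by simp [ht] : (n : ℝ) * 0 ≤ t), mul_one]
        rw [mul_zero, sub_zero, mul_pow]
      rw [this, Real.exp_eq_exp_ℝ, NormedSpace.exp_eq_tsum_div]
    have : Tendsto (fun t : ℝ => Real.exp (-μ * t)) atTop (nhds 0) := by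
      apply Real.tendsto_exp_atBot.comp
      exact tendsto_id.const_mul_atTop_of_neg (by linarith)
    exact this.congr' hev
  · have hev : DexpAux.F μ τ =ᶠ[atTop] fun t => dexp μ τ t := by
      filter_upwards [eventually_ge_atTop (0:ℝ)] with t ht
      exact (DexpAux.dexp_eq_F hτ ht).symm
    exact (DexpAux.F_tendsto_zero hμ hτ' hμτ).congr' hev
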